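/- For every ε > 0 there exists a finite simple connected graph G such that cdim(G) / mdim(G) ≤ ε. Concretely, the threshold graph G of order n ≥ 3 generated by the alternating sequence 0,1,0,1,…,0,1 satisfies cdim(G) = 2 while its metric dimension m = mdim(G) satisfies m + 2^m ≥ n, so mdim(G) → ∞ as n → ∞. -/

import Mathlib

open SimpleGraph

namespace ConnDim

open Classical in
/-- The local connectivity `κ(a,b)`: the maximum number of internally vertex-disjoint
`a`-`b` paths, with `κ(a,a) = ∞`. -/
noncomputable def localConn {V : Type*} (G : SimpleGraph V) (a b : V) : ℕ∞ :=
  if a = b then ⊤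
  else sSup {n : ℕ∞ | ∃ Ps : Finset (G.Path a b),
    (∀ p ∈ Ps, ∀ q ∈ Ps, p ≠ q → ∀ x : V,
        x ∈ p.1.support → x ∈ q.1.support → x = a ∨ x = b) ∧
    (Ps.card : ℕ∞) = n}

/-- A set `W` is connectivity resolving if vertices are determined by their
local connectivities to the elements of `W`. -/
def ConnResolving {V : Type*} (G : SimpleGraph V) (W : Set V) : Prop :=
  ∀ u v : V, (∀ w ∈ W, localConn G u w = localConn G v w) → u = v

/-- The connectivity dimension: minimum cardinality of a connectivity resolving set. -/
noncomputable def cdim {V : Type*} (G : SimpleGraph V) : ℕ :=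
  sInf {n : ℕ | ∃ W : Set V, ConnResolving G W ∧ W.ncard = n}

/-- A set `W` is metric resolving if vertices are determined by their distances
to the elements of `W`. -/
def MetricResolving {V : Type*} (G : SimpleGraph V) (W : Set V) : Prop :=
  ∀ u v : V, (∀ w ∈ W, G.dist u w = G.dist v w) → u = v

/-- The metric dimension: minimum cardinality of a metric resolving set. -/
noncomputable def mdim {V : Type*} (G : SimpleGraph V) : ℕ :=
  sInf {n : ℕ | ∃ W : Set V, MetricResolving G W ∧ W.ncard = n}

/-- `G` forces a `𝟙` representation if every minimum resolving set (basis) `B` admits a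
vertex whose local connectivity to every element of `B` equals `1`. -/
def ForcesOne {V : Type*} (G : SimpleGraph V) : Prop :=
  ∀ B : Set V, ConnResolving G B → B.ncard = cdim G →
    ∃ v : V, ∀ b ∈ B, localConn G v b = 1

/-- A cut vertex of a connected graph: its removal disconnects the graph. -/
def IsCutVertex {V : Type*} (G : SimpleGraph V) (v : V) : Prop :=
  G.Connected ∧ ¬ (G.induce {u : V | u ≠ v}).Connected

/-- A block of `G`: a maximal connected subgraph of `G` without a cut vertex of itself. -/
def IsBlock {V : Type*} (G : SimpleGraph V) (H : G.Subgraph) : Prop :=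
  H.coe.Connected ∧ (∀ v, ¬ IsCutVertex H.coe v) ∧
  ∀ H' : G.Subgraph, H ≤ H' → H'.coe.Connected → (∀ v, ¬ IsCutVertex H'.coe v) → H' = H

/-- The number of blocks of `G`. -/
noncomputable def numBlocks {V : Type*} (G : SimpleGraph V) : ℕ :=
  Nat.card {H : G.Subgraph // IsBlock G H}

/-- Two vertices are twins if they have the same neighborhood in the graph with
both of them deleted. -/
def AreTwins {V : Type*} (G : SimpleGraph V) (a b : V) : Prop :=
  ∀ x : V, x ≠ a → x ≠ b → (G.Adj a x ↔ G.Adj b x)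

/-- The threshold graph generated by a binary sequence `L` (`false` = isolated vertex,
`true` = dominating vertex): two vertices are adjacent iff the later one was added
as a dominating vertex. -/
def thresholdGraph (L : List Bool) : SimpleGraph (Fin L.length) :=
  SimpleGraph.fromRel (fun i j => i < j ∧ L.get j = true)

/-- The alternating binary sequence `0,1,0,1,…,0,1` of length `2 * n`. -/
def altList (n : ℕ) : List Bool := (List.replicate n [false, true]).flatten

/-- The join of two graphs on disjoint vertex sets by the bridge `v₁v₂`. -/
def bridgeJoin {V₁ V₂ : Type*} (G₁ : SimpleGraph V₁) (G₂ : SimpleGraph V₂)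
    (v₁ : V₁) (v₂ : V₂) : SimpleGraph (V₁ ⊕ V₂) :=
  G₁.map Function.Embedding.inl ⊔ G₂.map Function.Embedding.inr
    ⊔ SimpleGraph.fromEdgeSet {s(Sum.inl v₁, Sum.inr v₂)}

/-- The graph obtained from `G` by attaching a new leaf (the vertex `none`) to `u`. -/
def attachLeaf {V : Type*} (G : SimpleGraph V) (u : V) : SimpleGraph (Option V) :=
  G.map Function.Embedding.some ⊔ SimpleGraph.fromEdgeSet {s(some u, (none : Option V))}

/-- The chain of `t` triangles (triangle `i` has vertices `inl i.castSucc`, `inl i.succ`,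
`inr (inl i)`), with a leaf `inr (inr ())` attached to the end vertex `inl 0`. -/
def triChain (t : ℕ) : SimpleGraph (Fin (t+1) ⊕ Fin t ⊕ Unit) :=
  SimpleGraph.fromRel (fun a b =>
    match a, b with
    | Sum.inl i, Sum.inl j => (i : ℕ) + 1 = (j : ℕ)
    | Sum.inr (Sum.inl i), Sum.inl j => j = Fin.castSucc i ∨ j = Fin.succ i
    | Sum.inr (Sum.inr _), Sum.inl j => j = 0
    | _, _ => False)


/-! ### Auxiliary lemmas -/

section WalkAux
variable {V : Type*} {G : SimpleGraph V}

lemma walk_len_one {u w : V} (p : G.Walk u w) (h : p.length = 1) :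
    ∃ ha : G.Adj u w, p = SimpleGraph.Walk.cons ha SimpleGraph.Walk.nil := by
  cases p with
  | nil => simp at h
  | cons ha q =>
    cases q with
    | nil => exact ⟨ha, rfl⟩
    | cons hb r => simp [SimpleGraph.Walk.length_cons] at h

lemma gv1_adj {u w : V} (hne : u ≠ w) (p : G.Path u w) : G.Adj u (p.1.getVert 1) := by
  have hlen : 0 < p.1.length := by
    rcases Nat.eq_zero_or_pos p.1.length with h | h
    · exact absurd (SimpleGraph.Walk.eq_of_length_eq_zero h) hne
    · exact h
  have := p.1.adj_getVert_succ hlen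
  rwa [SimpleGraph.Walk.getVert_zero] at this

lemma gv1_mem {u w : V} (hne : u ≠ w) (p : G.Path u w) : p.1.getVert 1 ∈ p.1.support := by
  have hlen : 0 < p.1.length := by
    rcases Nat.eq_zero_or_pos p.1.length with h | h
    · exact absurd (SimpleGraph.Walk.eq_of_length_eq_zero h) hne
    · exact h
  exact SimpleGraph.Walk.mem_support_iff_exists_getVert.mpr ⟨1, rfl, hlen⟩

lemma gv1_ne {u w : V} (hne : u ≠ w) (p : G.Path u w) : p.1.getVert 1 ≠ u := by
  intro h
  exact G.irrefl (h ▸ gv1_adj hne p)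

lemma gv1_eq_w {u w : V} (hne : u ≠ w) (p : G.Path u w) (h : p.1.getVert 1 = w) :
    ∃ ha : G.Adj u w, p.1 = SimpleGraph.Walk.cons ha SimpleGraph.Walk.nil := by
  obtain ⟨pw, hp⟩ := p
  cases pw with
  | nil => exact absurd rfl hne
  | cons ha q =>
    simp only [SimpleGraph.Walk.getVert_cons_succ, SimpleGraph.Walk.getVert_zero] at h
    subst h
    have hq : q = SimpleGraph.Walk.nil := SimpleGraph.Walk.isPath_iff_eq_nil.mp hp.of_cons
    subst hq
    exact ⟨ha, rfl⟩

/-- internal-disjointness of a family of paths -/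
def DisjFam {u w : V} (G : SimpleGraph V) (Ps : Finset (G.Path u w)) : Prop :=
  ∀ p ∈ Ps, ∀ q ∈ Ps, p ≠ q → ∀ x : V,
      x ∈ p.1.support → x ∈ q.1.support → x = u ∨ x = w

lemma gv1_injOn {u w : V} (hne : u ≠ w) (Ps : Finset (G.Path u w)) (hd : DisjFam G Ps) :
    Set.InjOn (fun p : G.Path u w => p.1.getVert 1) Ps := by
  intro p hp q hq hpq
  by_contra hne'
  simp only at hpq
  have hmq : p.1.getVert 1 ∈ q.1.support := by rw [hpq]; exact gv1_mem hne q
  have hx := hd p hp q hq hne' _ (gv1_mem hne p) hmq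
  rcases hx with h | h
  · exact gv1_ne hne p h
  · obtain ⟨ha, hp1⟩ := gv1_eq_w hne p h
    obtain ⟨hb, hq1⟩ := gv1_eq_w hne q (hpq ▸ h)
    exact hne' (Subtype.ext (by rw [hp1, hq1]))

lemma localConn_self (a : V) : localConn G a a = ⊤ := if_pos rfl

lemma localConn_of_ne {a b : V} (h : a ≠ b) :
    localConn G a b = sSup {n : ℕ∞ | ∃ Ps : Finset (G.Path a b),
      DisjFam G Ps ∧ (Ps.card : ℕ∞) = n} := if_neg h

lemma localConn_le_card {u w : V} (hne : u ≠ w) (S : Finset V)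
    (hS : ∀ p : G.Path u w, p.1.getVert 1 ∈ S) :
    localConn G u w ≤ (S.card : ℕ∞) := by
  rw [localConn_of_ne hne]
  apply sSup_le
  rintro n ⟨Ps, hd, rfl⟩
  exact_mod_cast Finset.card_le_card_of_injOn _ (fun p _ => hS p) (gv1_injOn hne Ps hd)

lemma localConn_ne_top [Fintype V] {u w : V} (hne : u ≠ w) : localConn G u w ≠ ⊤ := by
  classical
  have := localConn_le_card (G := G) hne Finset.univ (fun p => Finset.mem_univ _)
  exact ne_top_of_le_ne_top (WithTop.natCast_ne_top _) this

lemma localConn_comm (a b : V) : localConn G a b = localConn G b a := by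
  classical
  by_cases hab : a = b
  · subst hab; rfl
  have key : ∀ u w : V, (huw : u ≠ w) → localConn G u w ≤ localConn G w u := by
    intro u w huw
    rw [localConn_of_ne huw, localConn_of_ne (Ne.symm huw)]
    apply sSup_le
    rintro n ⟨Ps, hd, rfl⟩
    apply le_sSup
    refine ⟨Ps.image (fun p => p.reverse), ?_, ?_⟩
    · rintro p' hp' q' hq' hne' x hxp hxq
      simp only [Finset.mem_image] at hp' hq'
      obtain ⟨p, hp, rfl⟩ := hp'
      obtain ⟨q, hq, rfl⟩ := hq'
      have hpq : p ≠ q := fun h => hne' (by rw [h])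
      have hxp' : x ∈ p.1.support := by
        have : (p.reverse).1 = p.1.reverse := rfl
        rw [this, SimpleGraph.Walk.support_reverse, List.mem_reverse] at hxp
        exact hxp
      have hxq' : x ∈ q.1.support := by
        have : (q.reverse).1 = q.1.reverse := rfl
        rw [this, SimpleGraph.Walk.support_reverse, List.mem_reverse] at hxq
        exact hxq
      exact (hd p hp q hq hpq x hxp' hxq').symm
    · rw [Finset.card_image_of_injective _ ?_]
      intro p q h
      have h2 : p.1.reverse = q.1.reverse := congrArg Subtype.val h
      have h3 : p.1.reverse.reverse = q.1.reverse.reverse := by rw [h2]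
      rw [SimpleGraph.Walk.reverse_reverse, SimpleGraph.Walk.reverse_reverse] at h3
      exact Subtype.ext h3
  exact le_antisymm (key a b hab) (key b a (Ne.symm hab))

lemma localConn_iso_le (e : G ≃g G) (u w : V) :
    localConn G u w ≤ localConn G (e u) (e w) := by
  classical
  by_cases hab : u = w
  · subst hab
    rw [localConn_self, localConn_self]
  have heq : e u ≠ e w := fun h => hab (e.injective h)
  rw [localConn_of_ne hab, localConn_of_ne heq]
  apply sSup_le
  rintro n ⟨Ps, hd, rfl⟩
  apply le_sSup
  refine ⟨Ps.image (fun p => p.map e.toHom e.injective), ?_, ?_⟩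
  · rintro p' hp' q' hq' hne' x hxp hxq
    simp only [Finset.mem_image] at hp' hq'
    obtain ⟨p, hp, rfl⟩ := hp'
    obtain ⟨q, hq, rfl⟩ := hq'
    have hpq : p ≠ q := fun h => hne' (by rw [h])
    have hxp' : x ∈ (p.1.map e.toHom).support := hxp
    have hxq' : x ∈ (q.1.map e.toHom).support := hxq
    rw [SimpleGraph.Walk.support_map, List.mem_map] at hxp' hxq'
    obtain ⟨y, hy, rfl⟩ := hxp'
    obtain ⟨z, hz, hzy⟩ := hxq'
    have : z = y := e.injective hzy
    subst this
    rcases hd p hp q hq hpq z hy hz with h | h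
    · left; rw [h]; rfl
    · right; rw [h]; rfl
  · rw [Finset.card_image_of_injective _ (SimpleGraph.Path.map_injective (f := e.toHom) e.injective u w)]

lemma localConn_iso (e : G ≃g G) (u w : V) :
    localConn G (e u) (e w) = localConn G u w := by
  refine le_antisymm ?_ (localConn_iso_le e u w)
  have := localConn_iso_le e.symm (e u) (e w)
  simpa using this

end WalkAux

open Classical in
noncomputable def nbr {V : Type*} [Fintype V] (G : SimpleGraph V) (u : V) : Finset V :=
  Finset.univ.filter (fun x => G.Adj u x)

lemma mem_nbr {V : Type*} [Fintype V] {G : SimpleGraph V} {u x : V} :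
    x ∈ nbr G u ↔ G.Adj u x := by
  classical
  simp [nbr]

section TwoPathAux
variable {V : Type*} {G : SimpleGraph V}

/-- a path of length two -/
def twoPath {u x w : V} (h1 : G.Adj u x) (h2 : G.Adj x w) (hne : u ≠ w) : G.Path u w :=
  ⟨SimpleGraph.Walk.cons h1 (SimpleGraph.Walk.cons h2 SimpleGraph.Walk.nil), by
    rw [SimpleGraph.Walk.isPath_def]
    simp [h1.ne, h2.ne, hne]⟩

lemma twoPath_coe {u x w : V} (h1 : G.Adj u x) (h2 : G.Adj x w) (hne : u ≠ w) :
    (twoPath h1 h2 hne).1.support = [u, x, w] := rfl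

lemma twoPath_gv1 {u x w : V} (h1 : G.Adj u x) (h2 : G.Adj x w) (hne : u ≠ w) :
    (twoPath h1 h2 hne).1.getVert 1 = x := rfl

lemma singleton_gv1 {u w : V} (h : G.Adj u w) :
    (SimpleGraph.Path.singleton h).1.getVert 1 = w := rfl

lemma singleton_support {u w : V} (h : G.Adj u w) :
    (SimpleGraph.Path.singleton h).1.support = [u, w] := rfl

variable [Fintype V]

lemma localConn_eq_card_nbr {u w : V} (hne : u ≠ w) (huw : G.Adj u w)
    (h : ∀ x : V, G.Adj u x → x ≠ w → G.Adj x w) :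
    localConn G u w = ((nbr G u).card : ℕ∞) := by
  classical
  refine le_antisymm (localConn_le_card hne _ (fun p => mem_nbr.mpr (gv1_adj hne p))) ?_
  rw [localConn_of_ne hne]
  set S : Finset V := (nbr G u).erase w with hS
  have hadj1 : ∀ x ∈ S, G.Adj u x := fun x hx => mem_nbr.mp (Finset.mem_of_mem_erase hx)
  have hadj2 : ∀ x ∈ S, G.Adj x w := fun x hx =>
    h x (mem_nbr.mp (Finset.mem_of_mem_erase hx)) (Finset.ne_of_mem_erase hx)
  set F : Finset (G.Path u w) :=
    insert (SimpleGraph.Path.singleton huw)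
      (S.attach.image (fun x => twoPath (hadj1 x.1 x.2) (hadj2 x.1 x.2) hne)) with hF
  have hgv : ∀ p ∈ F, p.1.support = [u, w] ∨
      (p.1.support = [u, p.1.getVert 1, w] ∧ p.1.getVert 1 ∈ S) := by
    intro p hp
    rw [hF, Finset.mem_insert] at hp
    rcases hp with rfl | hp
    · left; exact singleton_support huw
    · simp only [Finset.mem_image] at hp
      obtain ⟨x, _, rfl⟩ := hp
      right
      rw [twoPath_gv1, twoPath_coe]
      exact ⟨rfl, x.2⟩
  have hgvne : ∀ p ∈ F, ∀ q ∈ F, p ≠ q → p.1.getVert 1 ≠ q.1.getVert 1 := by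
    intro p hp q hq hpq
    rw [hF, Finset.mem_insert] at hp hq
    rcases hp with rfl | hp <;> rcases hq with rfl | hq
    · exact absurd rfl hpq
    · simp only [Finset.mem_image] at hq
      obtain ⟨x, _, rfl⟩ := hq
      rw [singleton_gv1, twoPath_gv1]
      exact fun hh => (Finset.ne_of_mem_erase x.2) hh.symm
    · simp only [Finset.mem_image] at hp
      obtain ⟨x, _, rfl⟩ := hp
      rw [singleton_gv1, twoPath_gv1]
      exact fun hh => (Finset.ne_of_mem_erase x.2) hh
    · simp only [Finset.mem_image] at hp hq
      obtain ⟨x, _, rfl⟩ := hp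
      obtain ⟨y, _, rfl⟩ := hq
      rw [twoPath_gv1, twoPath_gv1]
      intro hxy
      apply hpq
      have : x = y := Subtype.ext hxy
      rw [this]
  have hdisj : DisjFam G F := by
    intro p hp q hq hpq x hxp hxq
    have key : ∀ r ∈ F, ∀ y : V, y ∈ r.1.support → y = u ∨ y = w ∨ y = r.1.getVert 1 := by
      intro r hr y hy
      rcases hgv r hr with hs | ⟨hs, _⟩ <;> rw [hs] at hy <;> simp at hy <;> tauto
    rcases key p hp x hxp with h1 | h1 | h1
    · left; exact h1
    · right; exact h1
    · rcases key q hq x hxq with h2 | h2 | h2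
      · left; exact h2
      · right; exact h2
      · exact absurd (h1 ▸ h2 ▸ rfl) (hgvne p hp q hq hpq)
  apply le_sSup
  refine ⟨F, hdisj, ?_⟩
  have hcard : F.card = (nbr G u).card := by
    rw [hF, Finset.card_insert_of_notMem, Finset.card_image_of_injOn, Finset.card_attach]
    · rw [hS, Finset.card_erase_of_mem (mem_nbr.mpr huw)]
      have : 1 ≤ (nbr G u).card := Finset.card_pos.mpr ⟨w, mem_nbr.mpr huw⟩
      omega
    · intro x _ y _ hxy
      exact Subtype.ext (congrArg (fun p : G.Path u w => p.1.getVert 1) hxy)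
    · intro hmem
      simp only [Finset.mem_image] at hmem
      obtain ⟨x, _, hx⟩ := hmem
      exact (Finset.ne_of_mem_erase x.2)
        (congrArg (fun p : G.Path u w => p.1.getVert 1) hx)
  rw [hcard]

lemma card_nbr_lt_of_ssub [DecidableEq V] {u v c : V} (hvu : v ∈ nbr G u)
    (hcu : c ∉ nbr G u) (hcne : c ≠ u)
    (hsub : insert c (insert u ((nbr G u).erase v)) ⊆ nbr G v) :
    (nbr G u).card < (nbr G v).card := by
  classical
  have h1 : u ∉ (nbr G u).erase v := fun h => G.irrefl (mem_nbr.mp (Finset.mem_of_mem_erase h))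
  have h2 : c ∉ insert u ((nbr G u).erase v) := by
    rw [Finset.mem_insert]
    push_neg
    exact ⟨hcne, fun h => hcu (Finset.mem_of_mem_erase h)⟩
  have hc := Finset.card_le_card hsub
  rw [Finset.card_insert_of_notMem h2, Finset.card_insert_of_notMem h1,
      Finset.card_erase_of_mem hvu] at hc
  have hpos : 1 ≤ (nbr G u).card := Finset.card_pos.mpr ⟨v, hvu⟩
  omega

lemma card_nbr_lt_of_sub {u v w1 : V} (hsub : nbr G v ⊆ nbr G u)
    (hw : w1 ∈ nbr G u) (hw' : w1 ∉ nbr G v) :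
    (nbr G v).card < (nbr G u).card :=
  Finset.card_lt_card ⟨hsub, fun h => hw' (h hw)⟩

end TwoPathAux

/-! ### The alternating threshold graph -/

lemma altList_succ (n : ℕ) : altList (n + 1) = false :: true :: altList n := rfl

lemma altList_length (n : ℕ) : (altList n).length = 2 * n := by
  induction n with
  | zero => rfl
  | succ k ih => rw [altList_succ]; simp [ih]; omega

lemma altList_get (n : ℕ) : ∀ (k : ℕ) (h : k < (altList n).length),
    (altList n).get ⟨k, h⟩ = decide (k % 2 = 1) := by
  induction n with
  | zero => intro k h; simp [altList] at h
  | succ m ih =>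
    intro k h
    match k with
    | 0 => rfl
    | 1 => rfl
    | (j+2) =>
      have h' : j < (altList m).length := by
        have h1 := altList_length (m+1)
        have h2 := altList_length m
        omega
      have heq : (altList (m+1)).get ⟨j + 2, h⟩ = (altList m).get ⟨j, h'⟩ := rfl
      rw [heq, ih j h', Nat.add_mod_right]

lemma threshold_adj {n : ℕ} {i j : Fin (altList n).length} :
    (thresholdGraph (altList n)).Adj i j ↔
      ((i : ℕ) < j ∧ (j : ℕ) % 2 = 1) ∨ ((j : ℕ) < i ∧ (i : ℕ) % 2 = 1) := by
  rw [thresholdGraph, SimpleGraph.fromRel_adj]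
  constructor
  · rintro ⟨hne, h | h⟩
    · left
      refine ⟨h.1, ?_⟩
      have := h.2
      rw [altList_get n j.1 j.2] at this
      · simpa using this
    · right
      refine ⟨h.1, ?_⟩
      have := h.2
      rw [altList_get n i.1 i.2] at this
      · simpa using this
  · rintro (⟨hlt, hodd⟩ | ⟨hlt, hodd⟩)
    · refine ⟨?_, Or.inl ⟨hlt, ?_⟩⟩
      · exact fun hh => by simp [hh] at hlt
      · rw [altList_get n j.1 j.2]; simpa using hodd
    · refine ⟨?_, Or.inr ⟨hlt, ?_⟩⟩
      · exact fun hh => by simp [hh] at hlt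
      · rw [altList_get n i.1 i.2]; simpa using hodd

section AltMain
variable {n : ℕ}

set_option linter.unusedSectionVars false

lemma alt_mem_nbr {u x : Fin (altList n).length} :
    x ∈ nbr (thresholdGraph (altList n)) u ↔
      ((u : ℕ) < x ∧ (x : ℕ) % 2 = 1) ∨ ((x : ℕ) < u ∧ (u : ℕ) % 2 = 1) :=
  mem_nbr.trans threshold_adj

lemma deg_lt (u v : Fin (altList n).length) (hlt : (u : ℕ) < v)
    (hex : ¬((u : ℕ) = 0 ∧ (v : ℕ) = 1)) (hm : 6 ≤ (altList n).length) :
    (nbr (thresholdGraph (altList n)) u).card ≠ (nbr (thresholdGraph (altList n)) v).card := by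
  have hvlt := v.isLt
  have hult := u.isLt
  rcases Nat.mod_two_eq_zero_or_one (u : ℕ) with hu2 | hu2 <;>
    rcases Nat.mod_two_eq_zero_or_one (v : ℕ) with hv2 | hv2
  · refine (card_nbr_lt_of_sub ?_ (w1 := (⟨(u : ℕ) + 1, by omega⟩ : Fin _)) ?_ ?_).ne'
    · intro x hx
      rw [alt_mem_nbr] at hx ⊢
      omega
    · rw [alt_mem_nbr]; simp only [Fin.val_mk]; omega
    · rw [alt_mem_nbr]; simp only [Fin.val_mk]; omega
  · have hvu : v ∈ nbr (thresholdGraph (altList n)) u := by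
      rw [alt_mem_nbr]; left; exact ⟨hlt, hv2⟩
    rcases Nat.eq_zero_or_pos (u : ℕ) with hu0 | hu0
    · have hv3 : 3 ≤ (v : ℕ) := by omega
      refine (card_nbr_lt_of_ssub (c := (⟨2, by omega⟩ : Fin _)) hvu ?_ ?_ ?_).ne
      · rw [alt_mem_nbr]; simp only [Fin.val_mk]; omega
      · intro h; have := congrArg Fin.val h; simp only [Fin.val_mk] at this; omega
      · intro x hx
        rw [Finset.mem_insert, Finset.mem_insert] at hx
        rw [alt_mem_nbr]
        rcases hx with rfl | rfl | hx
        · simp only [Fin.val_mk]; omega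
        · omega
        · have hxv : (x : ℕ) ≠ (v : ℕ) :=
            fun hh => (Finset.ne_of_mem_erase hx) (Fin.ext hh)
          have hxm := alt_mem_nbr.mp (Finset.mem_of_mem_erase hx)
          omega
    · refine (card_nbr_lt_of_ssub (c := (⟨0, by omega⟩ : Fin _)) hvu ?_ ?_ ?_).ne
      · rw [alt_mem_nbr]; simp only [Fin.val_mk]; omega
      · intro h; have := congrArg Fin.val h; simp only [Fin.val_mk] at this; omega
      · intro x hx
        rw [Finset.mem_insert, Finset.mem_insert] at hx
        rw [alt_mem_nbr]
        rcases hx with rfl | rfl | hx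
        · simp only [Fin.val_mk]; omega
        · omega
        · have hxv : (x : ℕ) ≠ (v : ℕ) :=
            fun hh => (Finset.ne_of_mem_erase hx) (Fin.ext hh)
          have hxm := alt_mem_nbr.mp (Finset.mem_of_mem_erase hx)
          omega
  · refine (card_nbr_lt_of_sub ?_ (w1 := (⟨0, by omega⟩ : Fin _)) ?_ ?_).ne'
    · intro x hx
      rw [alt_mem_nbr] at hx ⊢
      omega
    · rw [alt_mem_nbr]; simp only [Fin.val_mk]; omega
    · rw [alt_mem_nbr]; simp only [Fin.val_mk]; omega
  · have hvu : v ∈ nbr (thresholdGraph (altList n)) u := by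
      rw [alt_mem_nbr]; left; exact ⟨hlt, hv2⟩
    refine (card_nbr_lt_of_ssub (c := (⟨(u : ℕ) + 1, by omega⟩ : Fin _)) hvu ?_ ?_ ?_).ne
    · rw [alt_mem_nbr]; simp only [Fin.val_mk]; omega
    · intro h; have := congrArg Fin.val h; simp only [Fin.val_mk] at this; omega
    · intro x hx
      rw [Finset.mem_insert, Finset.mem_insert] at hx
      rw [alt_mem_nbr]
      rcases hx with rfl | rfl | hx
      · simp only [Fin.val_mk]; omega
      · omega
      · have hxv : (x : ℕ) ≠ (v : ℕ) :=
          fun hh => (Finset.ne_of_mem_erase hx) (Fin.ext hh)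
        have hxm := alt_mem_nbr.mp (Finset.mem_of_mem_erase hx)
        omega

lemma deg_inj (hm : 6 ≤ (altList n).length) {u v : Fin (altList n).length}
    (hu0 : (u : ℕ) ≠ 0) (hv0 : (v : ℕ) ≠ 0)
    (h : (nbr (thresholdGraph (altList n)) u).card = (nbr (thresholdGraph (altList n)) v).card) :
    u = v := by
  by_contra hne
  have hvv : (u : ℕ) ≠ (v : ℕ) := fun hh => hne (Fin.ext hh)
  rcases Nat.lt_or_ge (u : ℕ) (v : ℕ) with hlt | hge
  · exact deg_lt u v hlt (by omega) hm h
  · exact deg_lt v u (by omega) (by omega) hm h.symm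

lemma swap_adj (h0 : 0 < (altList n).length) (h1 : 1 < (altList n).length) :
    ∀ a b : Fin (altList n).length, (thresholdGraph (altList n)).Adj a b →
      (thresholdGraph (altList n)).Adj
        (Equiv.swap ⟨0, h0⟩ ⟨1, h1⟩ a) (Equiv.swap ⟨0, h0⟩ ⟨1, h1⟩ b) := by
  intro a b hab
  set u0 : Fin (altList n).length := ⟨0, h0⟩ with hu0
  set u1 : Fin (altList n).length := ⟨1, h1⟩ with hu1
  have hv0 : (u0 : ℕ) = 0 := rfl
  have hv1 : (u1 : ℕ) = 1 := rfl
  rw [threshold_adj] at hab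
  rcases eq_or_ne a u0 with rfl | ha0
  · rcases eq_or_ne b u0 with rfl | hb0
    · omega
    · rcases eq_or_ne b u1 with rfl | hb1
      · rw [Equiv.swap_apply_left, Equiv.swap_apply_right, threshold_adj]; omega
      · have hb0' : (b : ℕ) ≠ 0 := fun h => hb0 (Fin.ext (by omega))
        have hb1' : (b : ℕ) ≠ 1 := fun h => hb1 (Fin.ext (by omega))
        rw [Equiv.swap_apply_left, Equiv.swap_apply_of_ne_of_ne hb0 hb1, threshold_adj]
        omega
  · rcases eq_or_ne a u1 with rfl | ha1
    · rcases eq_or_ne b u0 with rfl | hb0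
      · rw [Equiv.swap_apply_right, Equiv.swap_apply_left, threshold_adj]; omega
      · rcases eq_or_ne b u1 with rfl | hb1
        · omega
        · have hb0' : (b : ℕ) ≠ 0 := fun h => hb0 (Fin.ext (by omega))
          have hb1' : (b : ℕ) ≠ 1 := fun h => hb1 (Fin.ext (by omega))
          rw [Equiv.swap_apply_right, Equiv.swap_apply_of_ne_of_ne hb0 hb1, threshold_adj]
          omega
    · have ha0' : (a : ℕ) ≠ 0 := fun h => ha0 (Fin.ext (by omega))
      have ha1' : (a : ℕ) ≠ 1 := fun h => ha1 (Fin.ext (by omega))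
      rw [Equiv.swap_apply_of_ne_of_ne ha0 ha1]
      rcases eq_or_ne b u0 with rfl | hb0
      · rw [Equiv.swap_apply_left, threshold_adj]; omega
      · rcases eq_or_ne b u1 with rfl | hb1
        · rw [Equiv.swap_apply_right, threshold_adj]; omega
        · rw [Equiv.swap_apply_of_ne_of_ne hb0 hb1, threshold_adj]; omega

noncomputable def swapIso (h0 : 0 < (altList n).length) (h1 : 1 < (altList n).length) :
    thresholdGraph (altList n) ≃g thresholdGraph (altList n) where
  toEquiv := Equiv.swap ⟨0, h0⟩ ⟨1, h1⟩
  map_rel_iff' := by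
    intro a b
    constructor
    · intro h
      have := swap_adj h0 h1 _ _ h
      simpa [Equiv.swap_apply_self] using this
    · exact swap_adj h0 h1 a b

lemma swapIso_apply (h0 : 0 < (altList n).length) (h1 : 1 < (altList n).length)
    (x : Fin (altList n).length) :
    swapIso h0 h1 x = Equiv.swap ⟨0, h0⟩ ⟨1, h1⟩ x := rfl

lemma adj_to_odd {s w x : Fin (altList n).length} (hs : (s : ℕ) ≤ 1) (hw : (w : ℕ) % 2 = 1)
    (h1 : (thresholdGraph (altList n)).Adj s x) (h2 : x ≠ w) :
    (thresholdGraph (altList n)).Adj x w := by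
  rw [threshold_adj] at h1 ⊢
  have hxw : (x : ℕ) ≠ (w : ℕ) := fun hh => h2 (Fin.ext hh)
  omega

lemma dominating (hn : 1 ≤ n) {u : Fin (altList n).length}
    (hu : u ≠ ⟨(altList n).length - 1, by have := altList_length n; omega⟩) :
    (thresholdGraph (altList n)).Adj u
      ⟨(altList n).length - 1, by have := altList_length n; omega⟩ := by
  have hL := altList_length n
  rw [threshold_adj]
  have hu' : (u : ℕ) ≠ (altList n).length - 1 := fun hh => hu (Fin.ext (by simpa using hh))
  have := u.isLt
  simp only [Fin.val_mk]
  omega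

lemma cdim_alt (hn : 3 ≤ n) : cdim (thresholdGraph (altList n)) = 2 := by
  classical
  have hL := altList_length n
  have hm6 : 6 ≤ (altList n).length := by omega
  have hml : 0 < (altList n).length - 1 := by omega
  set G := thresholdGraph (altList n) with hG
  let v0 : Fin (altList n).length := ⟨0, by omega⟩
  let v1 : Fin (altList n).length := ⟨1, by omega⟩
  let v3 : Fin (altList n).length := ⟨3, by omega⟩
  let v5 : Fin (altList n).length := ⟨5, by omega⟩
  let vl : Fin (altList n).length := ⟨(altList n).length - 1, by omega⟩
  have hv0v : (v0 : ℕ) = 0 := rfl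
  have hv1v : (v1 : ℕ) = 1 := rfl
  have hv3v : (v3 : ℕ) = 3 := rfl
  have hv5v : (v5 : ℕ) = 5 := rfl
  have hvlv : (vl : ℕ) = (altList n).length - 1 := rfl
  have dom : ∀ u : Fin (altList n).length, u ≠ vl → G.Adj u vl := fun u hu =>
    dominating (by omega) hu
  have hκlast : ∀ u : Fin (altList n).length, u ≠ vl →
      localConn G u vl = ((nbr G u).card : ℕ∞) := fun u hu =>
    localConn_eq_card_nbr hu (dom u hu) (fun x _ hxl => dom x hxl)
  have hκodd : ∀ s w : Fin (altList n).length, (s : ℕ) ≤ 1 → (w : ℕ) % 2 = 1 → s ≠ w →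
      G.Adj s w → localConn G s w = ((nbr G s).card : ℕ∞) := fun s w hs hw hne hadj =>
    localConn_eq_card_nbr hne hadj (fun x hx hxw => adj_to_odd hs hw hx hxw)
  set T : Set ℕ := {k | ∃ W : Set (Fin (altList n).length), ConnResolving G W ∧ W.ncard = k}
    with hT
  have hcd : cdim G = sInf T := rfl
  have hv0vl : v0 ≠ vl := fun h => by
    have := congrArg Fin.val h; omega
  have h2T : 2 ∈ T := by
    refine ⟨{v0, vl}, ?_, Set.ncard_pair hv0vl⟩
    intro u v h
    have h0 := h v0 (by simp)
    have hl := h vl (by simp)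
    rcases eq_or_ne u vl with rfl | hul
    · rcases eq_or_ne v vl with rfl | hvl
      · rfl
      · rw [localConn_self] at hl
        exact absurd hl.symm (localConn_ne_top hvl)
    rcases eq_or_ne v vl with rfl | hvl
    · rw [localConn_self] at hl
      exact absurd hl (localConn_ne_top hul)
    rcases eq_or_ne u v0 with rfl | hu0
    · rcases eq_or_ne v v0 with rfl | hv0
      · rfl
      · rw [localConn_self] at h0
        exact absurd h0.symm (localConn_ne_top hv0)
    rcases eq_or_ne v v0 with rfl | hv0
    · rw [localConn_self] at h0
      exact absurd h0 (localConn_ne_top hu0)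
    rw [hκlast u hul, hκlast v hvl] at hl
    have hcards : (nbr G u).card = (nbr G v).card := Nat.cast_inj.mp hl
    exact deg_inj hm6 (fun hh => hu0 (Fin.ext hh)) (fun hh => hv0 (Fin.ext hh)) hcards
  have h0T : 0 ∉ T := by
    rintro ⟨W, hres, hc⟩
    rw [Set.ncard_eq_zero (Set.toFinite W)] at hc
    subst hc
    have := hres v0 v1 (fun w hw => absurd hw (Set.notMem_empty w))
    have := congrArg Fin.val this
    omega
  have h1T : 1 ∉ T := by
    rintro ⟨W, hres, hc⟩
    obtain ⟨w, rfl⟩ := Set.ncard_eq_one.mp hc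
    by_cases hw0 : w = v0
    · subst hw0
      have e1 : localConn G v1 v0 = ((nbr G v0).card : ℕ∞) := by
        rw [localConn_comm]
        exact hκodd v0 v1 (by omega) (by omega)
          (fun h => by have := congrArg Fin.val h; omega)
          (by rw [threshold_adj]; omega)
      have e3 : localConn G v3 v0 = ((nbr G v0).card : ℕ∞) := by
        rw [localConn_comm]
        exact hκodd v0 v3 (by omega) (by omega)
          (fun h => by have := congrArg Fin.val h; omega)
          (by rw [threshold_adj]; omega)
      have := hres v1 v3 (fun w hw => by
        rw [Set.mem_singleton_iff] at hw
        subst hw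
        rw [e1, e3])
      have := congrArg Fin.val this
      omega
    by_cases hw1 : w = v1
    · subst hw1
      have e3 : localConn G v3 v1 = ((nbr G v1).card : ℕ∞) := by
        rw [localConn_comm]
        exact hκodd v1 v3 (by omega) (by omega)
          (fun h => by have := congrArg Fin.val h; omega)
          (by rw [threshold_adj]; omega)
      have e5 : localConn G v5 v1 = ((nbr G v1).card : ℕ∞) := by
        rw [localConn_comm]
        exact hκodd v1 v5 (by omega) (by omega)
          (fun h => by have := congrArg Fin.val h; omega)
          (by rw [threshold_adj]; omega)
      have := hres v3 v5 (fun w hw => by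
        rw [Set.mem_singleton_iff] at hw
        subst hw
        rw [e3, e5])
      have := congrArg Fin.val this
      omega
    · let e := swapIso (n := n) (by omega) (by omega)
      have hev0 : e v0 = v1 := by
        rw [swapIso_apply]
        exact Equiv.swap_apply_left _ _
      have hew : e w = w := by
        rw [swapIso_apply]
        exact Equiv.swap_apply_of_ne_of_ne hw0 hw1
      have hκ : localConn G v1 w = localConn G v0 w := by
        have h := localConn_iso e v0 w
        rw [hev0, hew] at h
        exact h
      have := hres v0 v1 (fun w' hw' => by
        rw [Set.mem_singleton_iff] at hw'
        subst hw'
        exact hκ.symm)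
      have := congrArg Fin.val this
      omega
  have hne : T.Nonempty := ⟨2, h2T⟩
  have hmem := Nat.sInf_mem hne
  have hle := Nat.sInf_le h2T
  have hne0 : sInf T ≠ 0 := fun h => h0T (h ▸ hmem)
  have hne1 : sInf T ≠ 1 := fun h => h1T (h ▸ hmem)
  rw [hcd]
  omega

lemma alt_connected (hn : 1 ≤ n) : (thresholdGraph (altList n)).Connected := by
  have hL := altList_length n
  set vl : Fin (altList n).length := ⟨(altList n).length - 1, by omega⟩ with hvl
  rw [connected_iff]
  refine ⟨?_, ⟨vl⟩⟩
  have r1 : ∀ u, (thresholdGraph (altList n)).Reachable u vl := by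
    intro u
    by_cases h : u = vl
    · exact h ▸ Reachable.refl _
    · exact (dominating hn h).reachable
  intro u v
  exact (r1 u).trans (r1 v).symm

lemma alt_dist (hn : 1 ≤ n) {u w : Fin (altList n).length} (hne : u ≠ w) :
    (thresholdGraph (altList n)).dist u w = 1 ∨ (thresholdGraph (altList n)).dist u w = 2 := by
  have hL := altList_length n
  have hconn := alt_connected hn
  set G := thresholdGraph (altList n) with hG
  have hpos : 0 < G.dist u w := hconn.pos_dist_of_ne hne
  by_cases hadj : G.Adj u w
  · left
    exact SimpleGraph.dist_eq_one_iff_adj.mpr hadj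
  · right
    set vl : Fin (altList n).length := ⟨(altList n).length - 1, by omega⟩ with hvl
    have hu : u ≠ vl := by
      intro h
      apply hadj
      have hw' : w ≠ vl := fun hh => hne (h.trans hh.symm)
      have hx : G.Adj w vl := dominating hn hw'
      rw [← h] at hx
      exact hx.symm
    have hw : w ≠ vl := by
      intro h
      apply hadj
      have hx : G.Adj u vl := dominating hn hu
      rw [← h] at hx
      exact hx
    have hle : G.dist u w ≤ 2 := by
      have := SimpleGraph.dist_le (SimpleGraph.Walk.cons (dominating hn hu)
        (SimpleGraph.Walk.cons ((dominating hn hw).symm) SimpleGraph.Walk.nil))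
      simpa using this
    have hne1 : G.dist u w ≠ 1 := fun h => hadj (SimpleGraph.dist_eq_one_iff_adj.mp h)
    omega

lemma mdim_bound (hn : 3 ≤ n) :
    (altList n).length ≤ mdim (thresholdGraph (altList n))
      + 2 ^ mdim (thresholdGraph (altList n)) := by
  classical
  have hL := altList_length n
  set G := thresholdGraph (altList n) with hG
  have hconn := alt_connected (n := n) (by omega)
  set T : Set ℕ := {k | ∃ W : Set (Fin (altList n).length), MetricResolving G W ∧ W.ncard = k}
    with hT
  have hmd : mdim G = sInf T := rfl
  have hTne : T.Nonempty := by
    refine ⟨(Set.univ : Set (Fin (altList n).length)).ncard, Set.univ, ?_, rfl⟩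
    intro u v h
    have := h u (Set.mem_univ u)
    rw [SimpleGraph.dist_self] at this
    exact ((hconn.dist_eq_zero_iff).mp this.symm).symm
  obtain ⟨W, hres, hWc⟩ := Nat.sInf_mem hTne
  rw [← hmd] at hWc
  have hinj : Function.Injective
      (fun (u : ↥(Wᶜ)) (w : ↥W) => decide (G.dist u.1 w.1 = 1)) := by
    intro u u' h
    apply Subtype.ext
    apply hres
    intro w hw
    have hu : u.1 ≠ w := fun hh => u.2 (hh ▸ hw)
    have hu' : u'.1 ≠ w := fun hh => u'.2 (hh ▸ hw)
    have h12 := alt_dist (n := n) (by omega) hu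
    have h12' := alt_dist (n := n) (by omega) hu'
    have hcong := congrFun h ⟨w, hw⟩
    simp only at hcong
    rcases h12 with h1 | h1 <;> rcases h12' with h2 | h2 <;>
      rw [h1, h2] <;> simp [hG, h1, h2, -SimpleGraph.dist_eq_one_iff_adj] at hcong ⊢
  have hcard : Nat.card ↥(Wᶜ) ≤ 2 ^ mdim G := by
    have h1 := Nat.card_le_card_of_injective _ hinj
    have h2 : Nat.card (↥W → Bool) = 2 ^ mdim G := by
      have hb : Nat.card Bool = 2 := by simp [Nat.card_eq_fintype_card]
      rw [Nat.card_fun, hb, Nat.card_coe_set_eq, hWc]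
    omega
  have hsplit := Set.ncard_add_ncard_compl W
  rw [Nat.card_eq_fintype_card, Fintype.card_fin] at hsplit
  rw [Nat.card_coe_set_eq] at hcard
  omega

end AltMain


/-- for every `ε > 0` there is a connected graph `G` with
`cdim G / mdim G ≤ ε`; concretely the alternating threshold graph of order `2n ≥ 3` has
connectivity dimension `2` and metric dimension `m` with `m + 2^m ≥ 2n`. -/
theorem stmt8 :
    ∀ ε : ℝ, 0 < ε → ∃ n : ℕ,
      (altList n).length = 2 * n ∧ 3 ≤ (altList n).length ∧
      (thresholdGraph (altList n)).Connected ∧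
      cdim (thresholdGraph (altList n)) = 2 ∧
      (altList n).length ≤
        mdim (thresholdGraph (altList n)) + 2 ^ mdim (thresholdGraph (altList n)) ∧
      (cdim (thresholdGraph (altList n)) : ℝ) / (mdim (thresholdGraph (altList n)) : ℝ)
        ≤ ε := by
  intro ε hε
  set K := ⌈2/ε⌉₊ with hK
  have h2K : 1 ≤ 2 ^ K := Nat.one_le_two_pow
  refine ⟨K + 2 ^ K + 3, altList_length _, ?_, alt_connected (by omega), cdim_alt (by omega),
    mdim_bound (by omega), ?_⟩
  · rw [altList_length]; omega
  · have hc := cdim_alt (n := K + 2 ^ K + 3) (by omega)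
    have hb := mdim_bound (n := K + 2 ^ K + 3) (by omega)
    have hlen := altList_length (K + 2 ^ K + 3)
    set md := mdim (thresholdGraph (altList (K + 2 ^ K + 3))) with hmd
    have hKlt : K < md := by
      by_contra hle
      push_neg at hle
      have h2 : 2 ^ md ≤ 2 ^ K := Nat.pow_le_pow_right (by norm_num) hle
      omega
    rw [hc]
    have hmdpos : (0:ℝ) < md := by
      have : 0 < md := by omega
      exact_mod_cast this
    rw [div_le_iff₀ hmdpos]
    have h1 : 2/ε ≤ (K:ℝ) := Nat.le_ceil (2/ε)
    have h2 : (K:ℝ) ≤ md := by exact_mod_cast Nat.le_of_lt hKlt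
    have h3 : 2/ε ≤ (md:ℝ) := le_trans h1 h2
    have h4 := (div_le_iff₀ hε).mp h3
    push_cast
    linarith

end ConnDim
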